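/- In any deque state reachable during a sorting attempt, if some element i on the deque lies between two elements j and k on the deque with j > i and k > i (a sandwich state), then no continuation of the run can successfully sort the permutation. -/

import Mathlib

/-- State of a deque switchyard: output so far, the deque, remaining input. -/
structure DState where
  output : List ℕ
  deque : List ℕ
  input : List ℕ

/-- One step of deque sorting: push the next input element to either end of the
deque, or pop either end element of the deque to the output. -/
inductive DequeStep : DState → DState → Prop
  | pushLeft (o d i : List ℕ) (x : ℕ) : DequeStep ⟨o, d, x :: i⟩ ⟨o, x :: d, i⟩
  | pushRight (o d i : List ℕ) (x : ℕ) : DequeStep ⟨o, d, x :: i⟩ ⟨o, d ++ [x], i⟩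
  | popLeft (o d i : List ℕ) (x : ℕ) : DequeStep ⟨o, x :: d, i⟩ ⟨o ++ [x], d, i⟩
  | popRight (o d i : List ℕ) (x : ℕ) : DequeStep ⟨o, d ++ [x], i⟩ ⟨o ++ [x], d, i⟩

/-- A permutation (as a list) is deque-sortable if some run outputs `1, 2, …, n`. -/
def DequeSortable (l : List ℕ) : Prop :=
  Relation.ReflTransGen DequeStep ⟨[], [], l⟩ ⟨List.range' 1 l.length, [], []⟩

/-- A deque list is a sandwich if some element lies between two larger elements. -/
def Sandwich (d : List ℕ) : Prop :=
  ∃ (u v w t : List ℕ) (j i k : ℕ),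
    d = u ++ j :: v ++ i :: w ++ k :: t ∧ i < j ∧ i < k

/-- A doomed state: sandwich in deque, or a larger element already output while a
smaller one waits in the deque, or the output already fails to be sorted. -/
def Bad (s : DState) : Prop :=
  Sandwich s.deque ∨ (∃ j ∈ s.output, ∃ i ∈ s.deque, i < j) ∨
    ¬ s.output.Pairwise (· ≤ ·)

lemma concat_inj' {l₁ l₂ : List ℕ} {a b : ℕ} (h : l₁ ++ [a] = l₂ ++ [b]) :
    l₁ = l₂ ∧ a = b := by
  obtain ⟨h1, h2⟩ := List.append_inj' h rfl
  exact ⟨h1, by simpa using h2⟩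

lemma not_sorted_append {o : List ℕ} {i j : ℕ} (hj : j ∈ o) (hij : i < j) :
    ¬ (o ++ [i]).Pairwise (· ≤ ·) := by
  intro h
  rw [List.pairwise_append] at h
  exact absurd (h.2.2 j hj i (List.mem_singleton_self i)) (by omega)

lemma bad_step {s t : DState} (h : DequeStep s t) (hb : Bad s) : Bad t := by
  cases h with
  | pushLeft o d i x =>
    rcases hb with ⟨u, v, w, t', j, a, k, hd, h1, h2⟩ | ⟨j, hj, a, ha, hlt⟩ | h
    · replace hd : d = u ++ j :: v ++ a :: w ++ k :: t' := hd
      exact Or.inl ⟨x :: u, v, w, t', j, a, k, by simp [hd], h1, h2⟩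
    · exact Or.inr (Or.inl ⟨j, hj, a, List.mem_cons_of_mem _ ha, hlt⟩)
    · exact Or.inr (Or.inr h)
  | pushRight o d i x =>
    rcases hb with ⟨u, v, w, t', j, a, k, hd, h1, h2⟩ | ⟨j, hj, a, ha, hlt⟩ | h
    · replace hd : d = u ++ j :: v ++ a :: w ++ k :: t' := hd
      exact Or.inl ⟨u, v, w, t' ++ [x], j, a, k, by simp [hd], h1, h2⟩
    · exact Or.inr (Or.inl ⟨j, hj, a, List.mem_append_left _ ha, hlt⟩)
    · exact Or.inr (Or.inr h)
  | popLeft o d i x =>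
    rcases hb with ⟨u, v, w, t', j, a, k, hd, h1, h2⟩ | ⟨j, hj, a, ha, hlt⟩ | h
    · replace hd : x :: d = u ++ j :: v ++ a :: w ++ k :: t' := hd
      cases u with
      | nil =>
        simp only [List.nil_append] at hd
        obtain ⟨rfl, rfl⟩ := List.cons.inj hd
        refine Or.inr (Or.inl ⟨x, by simp, a, by simp, h1⟩)
      | cons u₀ u' =>
        simp only [List.cons_append] at hd
        obtain ⟨rfl, rfl⟩ := List.cons.inj hd
        exact Or.inl ⟨u', v, w, t', j, a, k, rfl, h1, h2⟩
    · rcases List.mem_cons.1 ha with rfl | ha'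
      · exact Or.inr (Or.inr (not_sorted_append hj hlt))
      · exact Or.inr (Or.inl ⟨j, List.mem_append_left _ hj, a, ha', hlt⟩)
    · exact Or.inr (Or.inr fun hs => h (hs.sublist (List.sublist_append_left _ _)))
  | popRight o d i x =>
    rcases hb with ⟨u, v, w, t', j, a, k, hd, h1, h2⟩ | ⟨j, hj, a, ha, hlt⟩ | h
    · replace hd : d ++ [x] = u ++ j :: v ++ a :: w ++ k :: t' := hd
      rcases List.eq_nil_or_concat t' with rfl | ⟨t'', y, rfl⟩
      · have hd' : d ++ [x] = (u ++ j :: v ++ a :: w) ++ [k] := by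
          simpa using hd
        obtain ⟨hdeq, hxk⟩ := concat_inj' hd'
        refine Or.inr (Or.inl ⟨x, by simp, a, ?_, hxk ▸ h2⟩)
        rw [hdeq]; simp
      · have hd' : d ++ [x] = (u ++ j :: v ++ a :: w ++ k :: t'') ++ [y] := by
          simpa using hd
        obtain ⟨hdeq, _⟩ := concat_inj' hd'
        exact Or.inl ⟨u, v, w, t'', j, a, k, by simpa using hdeq, h1, h2⟩
    · rcases List.mem_append.1 ha with ha' | ha'
      · exact Or.inr (Or.inl ⟨j, List.mem_append_left _ hj, a, ha', hlt⟩)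
      · have : a = x := List.mem_singleton.1 ha'
        subst this
        exact Or.inr (Or.inr (not_sorted_append hj hlt))
    · exact Or.inr (Or.inr fun hs => h (hs.sublist (List.sublist_append_left _ _)))

/-- From a sandwich state, no continuation of the run can end with the sorted
output `1, …, n` (and empty deque and input). -/
theorem sandwich_not_sortable (s : DState) (n : ℕ) (hs : Sandwich s.deque) :
    ¬ Relation.ReflTransGen DequeStep s ⟨List.range' 1 n, [], []⟩ := by
  intro hrun
  have hbad : ∀ t : DState, Relation.ReflTransGen DequeStep s t → Bad t := by
    intro t ht
    induction ht with
    | refl => exact Or.inl hs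
    | tail _ hstep ih => exact bad_step hstep ih
  rcases hbad _ hrun with ⟨u, v, w, t', j, a, k, hd, _, _⟩ | ⟨j, _, a, ha, _⟩ | h
  · simp at hd
  · simp at ha
  · exact h (by simpa using (List.pairwise_lt_range' (s := 1) (n := n)).imp le_of_lt)
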